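/- Let C : ℝ^N → ℝ be the extended dissipation functional of a detailed balanced Markov process, and let g be the metric on ℝ^N with g(e_m, e_n) = q_n^{-1} if m = n and 0 otherwise. Then the gradient flow equation dp/dt = −∇_g C(p), where ∇_g is the gradient with respect to g, coincides with the master equation dp/dt = Hp. -/

import Mathlib

open Finset

private lemma fderiv_C_single
    {N E : Type} [Fintype N] [Fintype E] [DecidableEq N]
    (s t : E → N) (r : E → ℝ) (q : N → ℝ)
    (C : (N → ℝ) → ℝ)
    (hC : ∀ p : N → ℝ,
      C p = (1/4) * ∑ e, r e * q (s e) * (p (s e) / q (s e) - p (t e) / q (t e))^2)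
    (p : N → ℝ) (n : N) :
    fderiv ℝ C p (Pi.single n 1)
      = (1/4) * ∑ e, (r e * q (s e)) * ((2 * (p (s e) / q (s e) - p (t e) / q (t e))) *
          ((if s e = n then (q (s e))⁻¹ else 0) - (if t e = n then (q (t e))⁻¹ else 0))) := by
  have hproj : ∀ (i : N) (c : ℝ),
      HasFDerivAt (fun p : N → ℝ => p i / c)
        (c⁻¹ • (ContinuousLinearMap.proj i : (N → ℝ) →L[ℝ] ℝ)) p := by
    intro i c
    simpa [div_eq_mul_inv, smul_smul, mul_comm] using
      ((ContinuousLinearMap.proj i : (N → ℝ) →L[ℝ] ℝ).hasFDerivAt (x := p)).mul_const c⁻¹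
  set D : E → (N → ℝ) →L[ℝ] ℝ := fun e =>
    (q (s e))⁻¹ • (ContinuousLinearMap.proj (s e) : (N → ℝ) →L[ℝ] ℝ)
      - (q (t e))⁻¹ • ContinuousLinearMap.proj (t e) with hD
  set u : E → ℝ := fun e => p (s e) / q (s e) - p (t e) / q (t e) with hu
  have h1 : ∀ e, HasFDerivAt
      (fun p : N → ℝ => p (s e) / q (s e) - p (t e) / q (t e)) (D e) p := fun e =>
    (hproj (s e) (q (s e))).sub (hproj (t e) (q (t e)))
  have h2 : ∀ e, HasFDerivAt
      (fun p : N → ℝ => r e * q (s e) * (p (s e) / q (s e) - p (t e) / q (t e))^2)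
      ((r e * q (s e)) • ((2 * u e) • D e)) p := by
    intro e
    have := ((h1 e).mul (h1 e)).const_mul (r e * q (s e))
    have h2smul : (2 * u e) • D e = u e • D e + u e • D e := by
      rw [two_mul, add_smul]
    rw [h2smul]
    simpa [pow_two, smul_add] using this
  have hsum : HasFDerivAt C
      ((1/4 : ℝ) • ∑ e, (r e * q (s e)) • ((2 * u e) • D e)) p := by
    have hCe : C = fun p : N → ℝ =>
        (1/4) * ∑ e, r e * q (s e) * (p (s e) / q (s e) - p (t e) / q (t e))^2 :=
      funext hC
    rw [hCe]
    exact (HasFDerivAt.fun_sum (fun e _ => h2 e)).const_mul (1/4)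
  rw [hsum.fderiv]
  simp only [ContinuousLinearMap.coe_smul', Pi.smul_apply, ContinuousLinearMap.sum_apply,
    ContinuousLinearMap.smul_apply, ContinuousLinearMap.sub_apply,
    ContinuousLinearMap.proj_apply, smul_eq_mul, hD, hu]
  rw [Finset.mul_sum, Finset.mul_sum]
  refine Finset.sum_congr rfl fun e _ => ?_
  have hs : (Pi.single n 1 : N → ℝ) (s e) = if s e = n then 1 else 0 := by
    simp [Pi.single_apply]
  have ht : (Pi.single n 1 : N → ℝ) (t e) = if t e = n then 1 else 0 := by
    simp [Pi.single_apply]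
  rw [hs, ht]
  split_ifs <;> ring

/-- Fibering a sum over edges by the value of a map to states. -/
private lemma sum_fiber
    {N E : Type} [Fintype N] [Fintype E] [DecidableEq N]
    (m : E → N) (P : E → Prop) [DecidablePred P] (a : E → ℝ) (F : N → ℝ) :
    (∑ e, if P e then a e * F (m e) else 0)
      = ∑ j, F j * ∑ e, if P e ∧ m e = j then a e else 0 := by
  calc (∑ e, if P e then a e * F (m e) else 0)
      = ∑ e, ∑ j, if P e ∧ m e = j then F j * a e else 0 := by
        refine Finset.sum_congr rfl fun e _ => ?_
        by_cases h : P e <;> simp [h, mul_comm]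
    _ = ∑ j, F j * ∑ e, if P e ∧ m e = j then a e else 0 := by
        rw [Finset.sum_comm]
        refine Finset.sum_congr rfl fun j _ => ?_
        rw [Finset.mul_sum]
        refine Finset.sum_congr rfl fun e _ => ?_
        split_ifs <;> simp

/-- For a detailed balanced Markov process with extended dissipation
functional C and the metric g with g(e_m, e_n) = δ_{mn} q_n⁻¹, the gradient
flow equation dp/dt = −∇_g C(p) coincides with the master equation
dp/dt = Hp: the g-gradient of C, whose components are (∇_g C)_n = q_n ∂C/∂p_n,
satisfies −(∇_g C(p))_n = (Hp)_n for every population p and state n. -/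
theorem gradient_flow_is_master_equation
    {N E : Type} [Fintype N] [Fintype E] [DecidableEq N]
    (s t : E → N) (r : E → ℝ) (hr : ∀ e, 0 < r e)
    (q : N → ℝ) (hq : ∀ i, 0 < q i)
    (h_db : ∀ i j : N,
      ∑ e ∈ univ.filter (fun e => s e = i ∧ t e = j), r e * q i
        = ∑ e ∈ univ.filter (fun e => s e = j ∧ t e = i), r e * q j)
    (H : Matrix N N ℝ)
    (hH_off : ∀ i j, i ≠ j → H i j = ∑ e ∈ univ.filter (fun e => s e = j ∧ t e = i), r e)
    (hH_diag : ∀ i, H i i = -∑ e ∈ univ.filter (fun e => s e = i ∧ t e ≠ i), r e)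
    (C : (N → ℝ) → ℝ)
    (hC : ∀ p : N → ℝ,
      C p = (1/4) * ∑ e, r e * q (s e) * (p (s e) / q (s e) - p (t e) / q (t e))^2)
    (gradC : (N → ℝ) → N → ℝ)
    (hgrad : ∀ p n, gradC p n = q n * fderiv ℝ C p (Pi.single n 1)) :
    ∀ p : N → ℝ, ∀ n, -gradC p n = H.mulVec p n := by
  intro p n
  classical
  have hq' : ∀ i, q i ≠ 0 := fun i => (hq i).ne'
  set u : E → ℝ := fun e => p (s e) / q (s e) - p (t e) / q (t e) with hu
  set A : ℝ := ∑ e, if t e = n then r e * p (s e) else 0 with hA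
  set Pn : ℝ := ∑ e, if s e = n then r e * p n else 0 with hPn
  -- detailed balance in indicator form
  have db : ∀ i j : N,
      (∑ e, if s e = i ∧ t e = j then r e * q i else 0)
        = ∑ e, if s e = j ∧ t e = i then r e * q j else 0 := by
    intro i j
    have := h_db i j
    rwa [Finset.sum_filter, Finset.sum_filter] at this
  -- key identity 1
  have key1 : (∑ e, if s e = n then (r e * q n) * (p (t e) / q (t e)) else 0) = A := by
    have l1 : (∑ e, if s e = n then (r e * q n) * (p (t e) / q (t e)) else 0)
        = ∑ j, (p j / q j) * ∑ e, if s e = n ∧ t e = j then r e * q n else 0 :=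
      sum_fiber t (fun e => s e = n) (fun e => r e * q n) (fun j => p j / q j)
    have l2 : A = ∑ j, p j * ∑ e, if t e = n ∧ s e = j then r e else 0 :=
      sum_fiber s (fun e => t e = n) r p
    rw [l1, l2]
    refine Finset.sum_congr rfl fun j _ => ?_
    rw [db n j, Finset.mul_sum, Finset.mul_sum]
    refine Finset.sum_congr rfl fun e _ => ?_
    by_cases h : s e = j ∧ t e = n
    · rw [if_pos h, if_pos ⟨h.2, h.1⟩]
      field_simp [hq' j]
    · rw [if_neg h, if_neg (fun hc => h ⟨hc.2, hc.1⟩), mul_zero, mul_zero]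
  -- key identity 2
  have key2 : (∑ e, if t e = n then r e * (q (s e) * (p n / q n)) else 0) = Pn := by
    have l1 : (∑ e, if t e = n then r e * (q (s e) * (p n / q n)) else 0)
        = ∑ j, (q j * (p n / q n)) * ∑ e, if t e = n ∧ s e = j then r e else 0 :=
      sum_fiber s (fun e => t e = n) r (fun j => q j * (p n / q n))
    have l2 : (∑ e, if s e = n then (r e * p n) * (1:ℝ) else 0)
        = ∑ j, (1:ℝ) * ∑ e, if s e = n ∧ t e = j then r e * p n else 0 :=
      sum_fiber t (fun e => s e = n) (fun e => r e * p n) (fun _ => (1:ℝ))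
    have l2' : Pn = ∑ j, (1:ℝ) * ∑ e, if s e = n ∧ t e = j then r e * p n else 0 := by
      rw [← l2, hPn]
      exact Finset.sum_congr rfl fun e _ => by split_ifs <;> simp
    rw [l1, l2']
    refine Finset.sum_congr rfl fun j _ => ?_
    have step : (q j * (p n / q n)) * (∑ e, if t e = n ∧ s e = j then r e else 0)
        = (p n / q n) * ∑ e, if s e = j ∧ t e = n then r e * q j else 0 := by
      rw [Finset.mul_sum, Finset.mul_sum]
      refine Finset.sum_congr rfl fun e _ => ?_
      by_cases h : t e = n ∧ s e = j
      · rw [if_pos h, if_pos ⟨h.2, h.1⟩]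
        ring
      · rw [if_neg h, if_neg (fun hc => h ⟨hc.2, hc.1⟩), mul_zero, mul_zero]
    rw [step, db j n, Finset.mul_sum, Finset.mul_sum]
    refine Finset.sum_congr rfl fun e _ => ?_
    split_ifs with h
    · field_simp [hq' n, hq' (s e), hq' (t e)]
    · simp
  -- gradient computation
  have hgradval : -gradC p n
      = (∑ e, if t e = n then (1/2) * (r e * q (s e)) * u e else 0)
        - ∑ e, if s e = n then (1/2) * (r e * q n) * u e else 0 := by
    rw [hgrad p n, fderiv_C_single s t r q C hC p n]
    rw [Finset.mul_sum, Finset.mul_sum, ← Finset.sum_neg_distrib, ← Finset.sum_sub_distrib]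
    refine Finset.sum_congr rfl fun e _ => ?_
    by_cases h1 : s e = n <;> by_cases h2 : t e = n
    · simp only [if_pos h1, if_pos h2, hu]
      rw [h1, h2]
      ring
    · simp only [if_pos h1, if_neg h2, hu]
      rw [h1]
      field_simp [hq' n, hq' (s e), hq' (t e)]
      ring
    · simp only [if_neg h1, if_pos h2, hu]
      rw [h2]
      field_simp [hq' n, hq' (s e), hq' (t e)]
      ring
    · simp only [if_neg h1, if_neg h2]
      ring
  -- expand the two sums
  have hT : (∑ e, if t e = n then (1/2 : ℝ) * (r e * q (s e)) * u e else 0)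
      = (1/2) * (A - Pn) := by
    have : (∑ e, if t e = n then (1/2 : ℝ) * (r e * q (s e)) * u e else 0)
        = (1/2) * ((∑ e, if t e = n then r e * p (s e) else 0)
            - ∑ e, if t e = n then r e * (q (s e) * (p n / q n)) else 0) := by
      rw [← Finset.sum_sub_distrib, Finset.mul_sum]
      refine Finset.sum_congr rfl fun e _ => ?_
      by_cases h : t e = n
      · simp only [if_pos h, hu]
        rw [h]
        field_simp [hq' (s e), hq' n]
      · simp [h]
    rw [this, key2, ← hA]
  have hS : (∑ e, if s e = n then (1/2 : ℝ) * (r e * q n) * u e else 0)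
      = (1/2) * (Pn - A) := by
    have : (∑ e, if s e = n then (1/2 : ℝ) * (r e * q n) * u e else 0)
        = (1/2) * ((∑ e, if s e = n then r e * p n else 0)
            - ∑ e, if s e = n then (r e * q n) * (p (t e) / q (t e)) else 0) := by
      rw [← Finset.sum_sub_distrib, Finset.mul_sum]
      refine Finset.sum_congr rfl fun e _ => ?_
      by_cases h : s e = n
      · simp only [if_pos h, hu]
        rw [h]
        field_simp [hq' (s e), hq' n]
      · simp [h]
    rw [this, key1, ← hPn]
  -- master equation side
  have hmaster : H.mulVec p n = A - Pn := by
    have hmv : H.mulVec p n = ∑ j, H n j * p j := by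
      simp [Matrix.mulVec, dotProduct]
    have hdiag : H n n * p n = -∑ e, if s e = n ∧ t e ≠ n then r e * p n else 0 := by
      rw [hH_diag n, Finset.sum_filter, neg_mul, Finset.sum_mul]
      congr 1
      refine Finset.sum_congr rfl fun e _ => ?_
      split_ifs <;> simp
    have g_def : ∀ j, (∑ e, if s e = j ∧ t e = n then r e * p j else 0)
        = p j * ∑ e, if t e = n ∧ s e = j then r e else 0 := by
      intro j
      rw [Finset.mul_sum]
      refine Finset.sum_congr rfl fun e _ => ?_
      by_cases h : s e = j ∧ t e = n
      · rw [if_pos h, if_pos ⟨h.2, h.1⟩]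
        ring
      · rw [if_neg h, if_neg (fun hc => h ⟨hc.2, hc.1⟩), mul_zero]
    have hAg : A = ∑ j, ∑ e, if s e = j ∧ t e = n then r e * p j else 0 := by
      rw [hA, sum_fiber s (fun e => t e = n) r p]
      exact Finset.sum_congr rfl fun j _ => (g_def j).symm
    have hoff : (∑ j ∈ univ.erase n, H n j * p j)
        = A - ∑ e, if s e = n ∧ t e = n then r e * p n else 0 := by
      have : (∑ j ∈ univ.erase n, H n j * p j)
          = ∑ j ∈ univ.erase n, ∑ e, if s e = j ∧ t e = n then r e * p j else 0 := by
        refine Finset.sum_congr rfl fun j hj => ?_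
        rw [hH_off n j (fun hnj => (Finset.mem_erase.1 hj).1 hnj.symm),
          Finset.sum_filter, Finset.sum_mul]
        refine Finset.sum_congr rfl fun e _ => ?_
        split_ifs <;> simp
      rw [this, Finset.sum_erase_eq_sub (Finset.mem_univ n), ← hAg]
    have hsplit : (∑ e, if s e = n ∧ t e = n then r e * p n else 0)
        + (∑ e, if s e = n ∧ t e ≠ n then r e * p n else 0) = Pn := by
      rw [hPn, ← Finset.sum_add_distrib]
      refine Finset.sum_congr rfl fun e _ => ?_
      by_cases h1 : s e = n <;> by_cases h2 : t e = n <;> simp [h1, h2]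
    rw [hmv, ← Finset.add_sum_erase _ _ (Finset.mem_univ n), hdiag, hoff]
    linarith [hsplit]
  rw [hgradval, hT, hS, hmaster]
  ring
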